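/- arXiv:2206.13026 — 3 statements merged into one kernel-verified Lean document; each statement's English description precedes it below -/
import Mathlib

section
/- Let X be a T1 regular space. If the hyperspace CL(X) with the Fell topology is Hausdorff and has the compact-G_δ property (every compact subset of CL(X) is a G_δ-set in CL(X)), then CL(X) with the Fell topology is a D_0-space. -/
open Set TopologicalSpace

universe u v

/-- The Fell topology on the collection of all subsets of `X`, generated by the subbase
consisting of the sets `U⁻ = {H | H ∩ U ≠ ∅}` for `U` open and
`(Kᶜ)⁺ = {H | H ⊆ Kᶜ}` for `K` compact. -/
def fellTopology (X : Type u) [TopologicalSpace X] : TopologicalSpace (Set X) :=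
  TopologicalSpace.generateFrom
    ({S | ∃ U : Set X, IsOpen U ∧ S = {H : Set X | (H ∩ U).Nonempty}} ∪
     {S | ∃ K : Set X, IsCompact K ∧ S = {H : Set X | H ⊆ Kᶜ}})

/-- The Vietoris topology on the collection of all subsets of `X`, generated by the subbase
consisting of the sets `U⁺ = {H | H ⊆ U}` and `U⁻ = {H | H ∩ U ≠ ∅}` for `U` open. -/
def vietorisTopology (X : Type u) [TopologicalSpace X] : TopologicalSpace (Set X) :=
  TopologicalSpace.generateFrom
    ({S | ∃ U : Set X, IsOpen U ∧ S = {H : Set X | H ⊆ U}} ∪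
     {S | ∃ U : Set X, IsOpen U ∧ S = {H : Set X | (H ∩ U).Nonempty}})

/-- A collection `S` of subsets of `X`, viewed as a hyperspace with the Fell topology. -/
def FellHyper (X : Type u) [TopologicalSpace X] (S : Set (Set X)) : Type u :=
  {A : Set X // A ∈ S}

/-- A collection `S` of subsets of `X`, viewed as a hyperspace with the Vietoris topology. -/
def VietorisHyper (X : Type u) [TopologicalSpace X] (S : Set (Set X)) : Type u :=
  {A : Set X // A ∈ S}

instance FellHyper.instTopologicalSpace (X : Type u) [TopologicalSpace X] (S : Set (Set X)) :
    TopologicalSpace (FellHyper X S) :=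
  TopologicalSpace.induced (Subtype.val : {A : Set X // A ∈ S} → Set X) (fellTopology X)

instance VietorisHyper.instTopologicalSpace (X : Type u) [TopologicalSpace X] (S : Set (Set X)) :
    TopologicalSpace (VietorisHyper X S) :=
  TopologicalSpace.induced (Subtype.val : {A : Set X // A ∈ S} → Set X) (vietorisTopology X)

/-- The underlying subset of `X` of a point of a Fell hyperspace. -/
def FellHyper.carrier {X : Type u} [TopologicalSpace X] {S : Set (Set X)}
    (A : FellHyper X S) : Set X :=
  Subtype.val A

/-- The underlying subset of `X` of a point of a Vietoris hyperspace. -/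
def VietorisHyper.carrier {X : Type u} [TopologicalSpace X] {S : Set (Set X)}
    (A : VietorisHyper X S) : Set X :=
  Subtype.val A

/-- `CL(X)`: the nonempty closed subsets of `X`. -/
def CL (X : Type u) [TopologicalSpace X] : Set (Set X) := {A | A.Nonempty ∧ IsClosed A}

/-- `𝒦(X)`: the nonempty compact subsets of `X`. -/
def Kcal (X : Type u) [TopologicalSpace X] : Set (Set X) := {A | A.Nonempty ∧ IsCompact A}

/-- `ℱ(X)`: the nonempty finite subsets of `X`. -/
def Fcal (X : Type u) : Set (Set X) := {A | A.Nonempty ∧ A.Finite}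

/-- `ℱₙ(X)`: the nonempty subsets of `X` with at most `n` points. -/
def Fn (X : Type u) (n : ℕ) : Set (Set X) := {A | A.Nonempty ∧ A.encard ≤ n}

/-- A space is a `D₁`-space if every nonempty closed subset has a countable
neighborhood base. -/
def IsD1Space (Y : Type v) [TopologicalSpace Y] : Prop :=
  ∀ F : Set Y, F.Nonempty → IsClosed F →
    ∃ B : ℕ → Set Y, (∀ n, IsOpen (B n) ∧ F ⊆ B n) ∧
      ∀ V : Set Y, IsOpen V → F ⊆ V → ∃ n, B n ⊆ V

/-- A space is a `D₀`-space if every nonempty compact subset has a countable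
neighborhood base. -/
def IsD0Space (Y : Type v) [TopologicalSpace Y] : Prop :=
  ∀ F : Set Y, F.Nonempty → IsCompact F →
    ∃ B : ℕ → Set Y, (∀ n, IsOpen (B n) ∧ F ⊆ B n) ∧
      ∀ V : Set Y, IsOpen V → F ⊆ V → ∃ n, B n ⊆ V

/-- A space has a `G_δ`-diagonal if the diagonal is a `G_δ`-set in `X × X`. -/
def HasGdeltaDiagonal (X : Type u) [TopologicalSpace X] : Prop :=
  ∃ U : ℕ → Set (X × X), (∀ n, IsOpen (U n)) ∧ (⋂ n, U n) = {p : X × X | p.1 = p.2}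

/-- A space is perfect if every closed subset is a `G_δ`-set. -/
def IsPerfectSpace (Y : Type v) [TopologicalSpace Y] : Prop :=
  ∀ F : Set Y, IsClosed F → ∃ U : ℕ → Set Y, (∀ n, IsOpen (U n)) ∧ F = ⋂ n, U n

/-- A space has the compact-`G_δ` property if every compact subset is a `G_δ`-set. -/
def CompactGDeltaProperty (Y : Type v) [TopologicalSpace Y] : Prop :=
  ∀ K : Set Y, IsCompact K → ∃ U : ℕ → Set Y, (∀ n, IsOpen (U n)) ∧ K = ⋂ n, U n

/-- `γ`-space. -/
def IsGammaSpace (Y : Type v) [TopologicalSpace Y] : Prop :=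
  ∃ g : ℕ → Y → Set Y,
    (∀ n y, IsOpen (g n y) ∧ y ∈ g n y) ∧
    (∀ y, ∀ V : Set Y, IsOpen V → y ∈ V → ∃ n, g n y ⊆ V) ∧
    (∀ n y, ∃ m, ∀ z ∈ g m y, g m z ⊆ g n y)

/-- A space has a `G_δ*`-diagonal if there is a sequence `𝒰 n` of open covers such that
`{x} = ⋂ n, closure (st(x, 𝒰 n))` for every `x`. -/
def HasGdeltaStarDiagonal (X : Type u) [TopologicalSpace X] : Prop :=
  ∃ 𝒰 : ℕ → Set (Set X),
    (∀ n, ∀ U ∈ 𝒰 n, IsOpen U) ∧ (∀ n, ⋃₀ 𝒰 n = univ) ∧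
    ∀ x : X, (⋂ n, closure (⋃₀ {U ∈ 𝒰 n | x ∈ U})) = {x}

section Statement17Aux

open Filter Topology

variable {X : Type u} [TopologicalSpace X]

/-- The generating family of the Fell topology. -/
def fellGen (X : Type u) [TopologicalSpace X] : Set (Set (Set X)) :=
  {S | ∃ U : Set X, IsOpen U ∧ S = {H : Set X | (H ∩ U).Nonempty}} ∪
  {S | ∃ K : Set X, IsCompact K ∧ S = {H : Set X | H ⊆ Kᶜ}}

lemma isOpen_fell_minus {S : Set (Set X)} {U : Set X} (hU : IsOpen U) :
    IsOpen {x : FellHyper X S | (Subtype.val x ∩ U).Nonempty} :=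
  (isOpen_induced_iff (t := fellTopology X)).mpr ⟨{H : Set X | (H ∩ U).Nonempty},
    TopologicalSpace.isOpen_generateFrom_of_mem (Or.inl ⟨U, hU, rfl⟩), rfl⟩

lemma isOpen_fell_plus {S : Set (Set X)} {K : Set X} (hK : IsCompact K) :
    IsOpen {x : FellHyper X S | Subtype.val x ⊆ Kᶜ} :=
  (isOpen_induced_iff (t := fellTopology X)).mpr ⟨{H : Set X | H ⊆ Kᶜ},
    TopologicalSpace.isOpen_generateFrom_of_mem (Or.inr ⟨K, hK, rfl⟩), rfl⟩

/-- Basic neighborhoods in a Fell hyperspace. -/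
lemma fell_basic_nhds {S : Set (Set X)} {O : Set (FellHyper X S)} (hO : IsOpen O)
    {a : FellHyper X S} (ha : a ∈ O) :
    ∃ (𝒱 : Set (Set X)) (M : Set X), 𝒱.Finite ∧ (∀ V ∈ 𝒱, IsOpen V) ∧ IsCompact M ∧
      (∀ V ∈ 𝒱, (Subtype.val a ∩ V).Nonempty) ∧ Subtype.val a ∩ M = ∅ ∧
      ∀ b : FellHyper X S, (∀ V ∈ 𝒱, (Subtype.val b ∩ V).Nonempty) →
        Subtype.val b ∩ M = ∅ → b ∈ O := by
  obtain ⟨t, ht, rfl⟩ := (isOpen_induced_iff (t := fellTopology X) (f := Subtype.val)).mp hO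
  have ht' : TopologicalSpace.GenerateOpen (fellGen X) t := ht
  clear hO ht
  revert ha
  induction ht' with
  | basic s hs =>
      intro ha
      rcases hs with ⟨U, hU, rfl⟩ | ⟨K, hK, rfl⟩
      · refine ⟨{U}, ∅, finite_singleton U, ?_, isCompact_empty, ?_, inter_empty _,
          fun b hb _ => ?_⟩
        · intro V hV; rw [mem_singleton_iff] at hV; exact hV ▸ hU
        · intro V hV; rw [mem_singleton_iff] at hV; exact hV ▸ ha
        · exact hb U rfl
      · refine ⟨∅, K, finite_empty, by simp, hK, by simp, ?_, fun b _ hb => ?_⟩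
        · exact (subset_compl_iff_disjoint_right.mp ha).inter_eq
        · exact subset_compl_iff_disjoint_right.mpr (disjoint_iff_inter_eq_empty.mpr hb)
  | univ =>
      intro _
      exact ⟨∅, ∅, finite_empty, by simp, isCompact_empty, by simp, inter_empty _,
        fun b _ _ => mem_univ _⟩
  | inter s t hs ht ihs iht =>
      intro ha
      obtain ⟨V₁, M₁, hf₁, ho₁, hc₁, haV₁, haM₁, hi₁⟩ := ihs ha.1
      obtain ⟨V₂, M₂, hf₂, ho₂, hc₂, haV₂, haM₂, hi₂⟩ := iht ha.2
      refine ⟨V₁ ∪ V₂, M₁ ∪ M₂, hf₁.union hf₂, ?_, hc₁.union hc₂, ?_, ?_, ?_⟩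
      · rintro V (hV | hV); exacts [ho₁ V hV, ho₂ V hV]
      · rintro V (hV | hV); exacts [haV₁ V hV, haV₂ V hV]
      · rw [inter_union_distrib_left, haM₁, haM₂, union_empty]
      · intro b hbV hbM
        rw [inter_union_distrib_left, union_empty_iff] at hbM
        exact ⟨hi₁ b (fun V hV => hbV V (Or.inl hV)) hbM.1,
          hi₂ b (fun V hV => hbV V (Or.inr hV)) hbM.2⟩
  | sUnion C hC ih =>
      intro ha
      obtain ⟨t, htC, hat⟩ := ha
      obtain ⟨𝒱, M, hf, ho, hc, haV, haM, hi⟩ := ih t htC hat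
      exact ⟨𝒱, M, hf, ho, hc, haV, haM,
        fun b hbV hbM => ⟨t, htC, hi b hbV hbM⟩⟩

/-- If the Fell hyperspace of nonempty closed sets is Hausdorff, then every point of `X`
has a compact neighborhood. -/
lemma fell_weaklyLocallyCompact [T1Space X] (h2 : T2Space (FellHyper X (CL X))) (z : X) :
    ∃ M : Set X, IsCompact M ∧ M ∈ 𝓝 z := by
  by_cases hsing : ∀ y : X, y = z
  · refine ⟨univ, ?_, univ_mem⟩
    have huniv : (univ : Set X) = {z} := by
      ext w; simp [hsing w]
    rw [huniv]; exact isCompact_singleton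
  · push_neg at hsing
    obtain ⟨y, hyz⟩ := hsing
    have hamem : ({y, z} : Set X) ∈ CL X := ⟨⟨y, by simp⟩, (Set.toFinite _).isClosed⟩
    have hbmem : ({y} : Set X) ∈ CL X := ⟨⟨y, rfl⟩, isClosed_singleton⟩
    have hab : @Ne (FellHyper X (CL X)) ⟨{y, z}, hamem⟩ ⟨{y}, hbmem⟩ := by
      intro h
      have hvals : ({y, z} : Set X) = {y} :=
        congrArg (fun c : FellHyper X (CL X) => Subtype.val c) h
      have hzmem : z ∈ ({y, z} : Set X) := by simp
      have hz : z ∈ ({y} : Set X) := hvals ▸ hzmem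
      have hzy : z = y := hz
      exact hyz hzy.symm
    haveI := h2
    obtain ⟨Oa, Ob, hOa, hOb, haOa, hbOb, hdisj⟩ := t2_separation hab
    obtain ⟨𝒱a, Ma, hVaf, hVao, hMa, hVaA₀, hMaA₀, himpA⟩ := fell_basic_nhds hOa haOa
    obtain ⟨𝒱b, Mb, hVbf, hVbo, hMb, hVbB₀, hMbB₀, himpB⟩ := fell_basic_nhds hOb hbOb
    have hVaA : ∀ V ∈ 𝒱a, (({y, z} : Set X) ∩ V).Nonempty := hVaA₀
    have hMaA : ({y, z} : Set X) ∩ Ma = ∅ := hMaA₀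
    have hVbB : ∀ V ∈ 𝒱b, (({y} : Set X) ∩ V).Nonempty := hVbB₀
    have hMbB : ({y} : Set X) ∩ Mb = ∅ := hMbB₀
    by_contra hnc
    push_neg at hnc
    have hMt : IsCompact (Ma ∪ Mb) := hMa.union hMb
    have hyMt : y ∉ Ma ∪ Mb := by
      rintro (hy | hy)
      · exact (eq_empty_iff_forall_notMem.mp hMaA y) ⟨by simp, hy⟩
      · exact (eq_empty_iff_forall_notMem.mp hMbB y) ⟨rfl, hy⟩
    have hwit : ∀ V ∈ 𝒱a, ∃ p, p ∈ V ∧ p ∉ Ma ∪ Mb := by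
      intro V hV
      by_cases hyV : y ∈ V
      · exact ⟨y, hyV, hyMt⟩
      · have hzV : z ∈ V := by
          obtain ⟨q, hq1, hq2⟩ := hVaA V hV
          have hq1' : q = y ∨ q = z := by simpa using hq1
          rcases hq1' with rfl | rfl
          · exact absurd hq2 hyV
          · exact hq2
        have hnsub : ¬ V ⊆ Ma ∪ Mb := fun hsub =>
          hnc (Ma ∪ Mb) hMt (Filter.mem_of_superset ((hVao V hV).mem_nhds hzV) hsub)
        obtain ⟨p, hpV, hpM⟩ := not_subset.mp hnsub
        exact ⟨p, hpV, hpM⟩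
    have hwit' : ∀ V : Set X, ∃ p, V ∈ 𝒱a → p ∈ V ∧ p ∉ Ma ∪ Mb := by
      intro V
      by_cases hV : V ∈ 𝒱a
      · obtain ⟨p, hp⟩ := hwit V hV; exact ⟨p, fun _ => hp⟩
      · exact ⟨y, fun h => absurd h hV⟩
    choose w hw using hwit'
    have hHmem : insert y (w '' 𝒱a) ∈ CL X :=
      ⟨⟨y, mem_insert _ _⟩, ((hVaf.image w).insert y).isClosed⟩
    have hc1 : (⟨insert y (w '' 𝒱a), hHmem⟩ : FellHyper X (CL X)) ∈ Oa := by
      apply himpA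
      · intro V hV
        exact ⟨w V, mem_insert_of_mem _ (mem_image_of_mem w hV), (hw V hV).1⟩
      · apply eq_empty_iff_forall_notMem.mpr
        rintro p ⟨hpH, hpMa⟩
        rcases mem_insert_iff.mp hpH with rfl | hp
        · exact hyMt (Or.inl hpMa)
        · obtain ⟨V, hV, rfl⟩ := hp
          exact (hw V hV).2 (Or.inl hpMa)
    have hc2 : (⟨insert y (w '' 𝒱a), hHmem⟩ : FellHyper X (CL X)) ∈ Ob := by
      apply himpB
      · intro V hV
        obtain ⟨q, hq1, hq2⟩ := hVbB V hV
        have hqy : q = y := hq1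
        exact ⟨y, mem_insert _ _, hqy ▸ hq2⟩
      · apply eq_empty_iff_forall_notMem.mpr
        rintro p ⟨hpH, hpMb⟩
        rcases mem_insert_iff.mp hpH with rfl | hp
        · exact hyMt (Or.inr hpMb)
        · obtain ⟨V, hV, rfl⟩ := hp
          exact (hw V hV).2 (Or.inr hpMb)
    exact Set.disjoint_left.mp hdisj hc1 hc2

/-- The Fell hyperspace of all closed sets is Hausdorff, provided the Fell hyperspace of
nonempty closed sets is. -/
lemma fell_t2_closeds [T1Space X] [RegularSpace X] (h2 : T2Space (FellHyper X (CL X))) :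
    T2Space (FellHyper X {A : Set X | IsClosed A}) := by
  have key : ∀ a b : FellHyper X {A : Set X | IsClosed A}, ∀ p, p ∈ Subtype.val a →
      p ∉ Subtype.val b →
      ∃ u v, IsOpen u ∧ IsOpen v ∧ a ∈ u ∧ b ∈ v ∧ Disjoint u v := by
    intro a b p hpa hpb
    obtain ⟨C, hC, hCnhds⟩ := fell_weaklyLocallyCompact h2 p
    have hbcl : IsClosed (Subtype.val b) := b.2
    have hmem : (Subtype.val b)ᶜ ∩ interior C ∈ 𝓝 p :=
      inter_mem (hbcl.isOpen_compl.mem_nhds hpb) (interior_mem_nhds.mpr hCnhds)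
    obtain ⟨N, ⟨hNn, hNcl⟩, hNsub⟩ := (closed_nhds_basis p).mem_iff.mp hmem
    have hNC : N ⊆ C := fun q hq => interior_subset (hNsub hq).2
    have hNcpt : IsCompact N := hC.of_isClosed_subset hNcl hNC
    refine ⟨{x : FellHyper X {A : Set X | IsClosed A} | (Subtype.val x ∩ interior N).Nonempty},
      {x : FellHyper X {A : Set X | IsClosed A} | Subtype.val x ⊆ Nᶜ},
      isOpen_fell_minus isOpen_interior, isOpen_fell_plus hNcpt,
      ⟨p, hpa, mem_interior_iff_mem_nhds.mpr hNn⟩,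
      fun q hq hqN => (hNsub hqN).1 hq, ?_⟩
    apply Set.disjoint_left.mpr
    rintro x ⟨q, hq1, hq2⟩ hx2
    exact hx2 hq1 (interior_subset hq2)
  constructor
  intro a b hab
  have hne : Subtype.val a ≠ Subtype.val b := fun h => hab (Subtype.ext h)
  by_cases hsub : Subtype.val a ⊆ Subtype.val b
  · have hns : ¬ Subtype.val b ⊆ Subtype.val a := fun h => hne (hsub.antisymm h)
    obtain ⟨p, hpb, hpa⟩ := not_subset.mp hns
    obtain ⟨u, v, hu, hv, hbu, hav, hdisj⟩ := key b a p hpb hpa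
    exact ⟨v, u, hv, hu, hav, hbu, hdisj.symm⟩
  · obtain ⟨p, hpa, hpb⟩ := not_subset.mp hsub
    exact key a b p hpa hpb

/-- The Fell hyperspace of all closed sets is always compact. -/
lemma fell_compactSpace_closeds : CompactSpace (FellHyper X {A : Set X | IsClosed A}) := by
  rw [← isCompact_univ_iff, isCompact_iff_ultrafilter_le_nhds]
  intro f _
  classical
  set H0 : Set X := {x | ∀ U : Set X, IsOpen U → x ∈ U →
    {A : FellHyper X {A : Set X | IsClosed A} | (Subtype.val A ∩ U).Nonempty} ∈ f} with hH0
  have hH0closed : IsClosed H0 := by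
    rw [← isOpen_compl_iff, isOpen_iff_forall_mem_open]
    intro x hx
    rw [hH0, mem_compl_iff, mem_setOf_eq] at hx
    push_neg at hx
    obtain ⟨U, hU, hxU, hUf⟩ := hx
    exact ⟨U, fun x' hx' hx'H0 => hUf (hx'H0 U hU hx'), hU, hxU⟩
  refine ⟨⟨H0, hH0closed⟩, mem_univ _, ?_⟩
  refine (nhds_basis_opens _).ge_iff.mpr ?_
  rintro s ⟨hmem, hsopen⟩
  obtain ⟨t, ht, rfl⟩ := (isOpen_induced_iff (t := fellTopology X) (f := Subtype.val)).mp hsopen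
  have ht' : TopologicalSpace.GenerateOpen (fellGen X) t := ht
  clear ht hsopen
  revert hmem
  induction ht' with
  | basic s hs =>
      intro hmem
      rcases hs with ⟨U, hU, rfl⟩ | ⟨K, hK, rfl⟩
      · obtain ⟨x, hxH0, hxU⟩ := hmem
        exact hxH0 U hU hxU
      · have hmem' : H0 ⊆ Kᶜ := hmem
        have hx : ∀ x : X, ∃ U : Set X, IsOpen U ∧ (x ∈ K → (x ∈ U ∧
            {A : FellHyper X {A : Set X | IsClosed A} | (Subtype.val A ∩ U).Nonempty} ∉ f)) := by
          intro x
          by_cases hxK : x ∈ K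
          · by_contra hcon
            push_neg at hcon
            have hxH0 : x ∈ H0 := fun U hU hxU => (hcon U hU).2 hxU
            exact hmem' hxH0 hxK
          · exact ⟨∅, isOpen_empty, fun h => absurd h hxK⟩
        choose Ux hUo hUk using hx
        have hcov : K ⊆ ⋃ x ∈ K, Ux x := fun x hxK => mem_biUnion hxK (hUk x hxK).1
        obtain ⟨b', hb'sub, hb'fin, hb'cov⟩ :=
          hK.elim_finite_subcover_image (fun x _ => hUo x) hcov
        have hcompl : ∀ x ∈ b',
            {A : FellHyper X {A : Set X | IsClosed A} | Subtype.val A ∩ Ux x = ∅} ∈ f := by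
          intro x hxb'
          have hnot := (hUk x (hb'sub hxb')).2
          have hc := Ultrafilter.compl_mem_iff_notMem.mpr hnot
          convert hc using 1
          ext A
          simp [← Set.not_nonempty_iff_eq_empty]
        have hinter : (⋂ x ∈ b',
            {A : FellHyper X {A : Set X | IsClosed A} | Subtype.val A ∩ Ux x = ∅}) ∈ f :=
          (Filter.biInter_mem hb'fin).mpr hcompl
        refine Filter.mem_of_superset hinter ?_
        intro A hA
        show Subtype.val A ⊆ Kᶜ
        intro q hq hqK
        obtain ⟨x, hxb, hqUx⟩ := mem_iUnion₂.mp (hb'cov hqK)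
        have hempty : Subtype.val A ∩ Ux x = ∅ := mem_iInter₂.mp hA x hxb
        exact (eq_empty_iff_forall_notMem.mp hempty q) ⟨hq, hqUx⟩
  | univ =>
      intro _
      exact Filter.univ_mem
  | inter s t hs ht ihs iht =>
      intro hmem
      exact Filter.inter_mem (ihs hmem.1) (iht hmem.2)
  | sUnion C hC ih =>
      intro hmem
      obtain ⟨t, htC, hmt⟩ := hmem
      exact Filter.mem_of_superset (ih t htC hmt)
        (Set.preimage_mono (subset_sUnion_of_mem htC))

/-- In a locally compact Hausdorff space, the compact-`G_δ` property implies the `D₀` property. -/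
lemma d0_of_locallyCompact {Y : Type v} [TopologicalSpace Y] [T2Space Y] [LocallyCompactSpace Y]
    (hG : CompactGDeltaProperty Y) : IsD0Space Y := by
  intro F hFne hFcpt
  obtain ⟨U, hUo, hUeq⟩ := hG F hFcpt
  have hFU : ∀ n, F ⊆ U n := fun n => hUeq ▸ iInter_subset U n
  have step : ∀ O : Set Y, IsOpen O → F ⊆ O →
      ∃ L : Set Y, IsCompact L ∧ F ⊆ interior L ∧ L ⊆ O :=
    fun O hO h => exists_compact_between hFcpt hO h
  obtain ⟨L0, hL0c, hL0i, hL0s⟩ := step (U 0) (hUo 0) (hFU 0)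
  have hnext : ∀ (n : ℕ) (L : {L : Set Y // IsCompact L ∧ F ⊆ interior L ∧ L ⊆ U n}),
      ∃ L' : {L : Set Y // IsCompact L ∧ F ⊆ interior L ∧ L ⊆ U (n + 1)},
        Subtype.val L' ⊆ interior (Subtype.val L) := by
    intro n L
    obtain ⟨L', h1, h2, h3⟩ := step (interior (Subtype.val L) ∩ U (n + 1))
      (isOpen_interior.inter (hUo (n + 1))) (subset_inter L.2.2.1 (hFU (n + 1)))
    exact ⟨⟨L', h1, h2, h3.trans inter_subset_right⟩, h3.trans inter_subset_left⟩
  choose nf hnf using hnext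
  let seq : ∀ n : ℕ, {L : Set Y // IsCompact L ∧ F ⊆ interior L ∧ L ⊆ U n} :=
    fun n => Nat.rec ⟨L0, hL0c, hL0i, hL0s⟩ nf n
  have hstep : ∀ n, Subtype.val (seq (n + 1)) ⊆ interior (Subtype.val (seq n)) :=
    fun n => hnf n (seq n)
  refine ⟨fun n => interior (Subtype.val (seq n)),
    fun n => ⟨isOpen_interior, (seq n).2.2.1⟩, ?_⟩
  intro V hV hFV
  by_contra hcon
  push_neg at hcon
  have hne : ∀ n, (Subtype.val (seq n) ∩ Vᶜ).Nonempty := by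
    intro n
    obtain ⟨x, hx1, hx2⟩ := not_subset.mp (hcon n)
    exact ⟨x, interior_subset hx1, hx2⟩
  have hdec : ∀ n, Subtype.val (seq (n + 1)) ∩ Vᶜ ⊆ Subtype.val (seq n) ∩ Vᶜ :=
    fun n => inter_subset_inter_left _ ((hstep n).trans interior_subset)
  have hcl : ∀ n, IsClosed (Subtype.val (seq n) ∩ Vᶜ) :=
    fun n => ((seq n).2.1.isClosed).inter hV.isClosed_compl
  obtain ⟨z, hz⟩ := IsCompact.nonempty_iInter_of_sequence_nonempty_isCompact_isClosed
    (fun n => Subtype.val (seq n) ∩ Vᶜ) hdec hne ((seq 0).2.1.inter_right hV.isClosed_compl) hcl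
  have hzF : z ∈ F := by
    rw [hUeq]
    exact mem_iInter.mpr fun n => (seq n).2.2.2 (mem_iInter.mp hz n).1
  exact (mem_iInter.mp hz 0).2 (hFV hzF)

end Statement17Aux

/-- The inclusion of `CL(X)` into the hyperspace of all closed sets. -/
noncomputable def toClosedFell (X : Type u) [TopologicalSpace X] :
    FellHyper X (CL X) → FellHyper X {A : Set X | IsClosed A} :=
  fun a => ⟨Subtype.val a, a.2.2⟩

/-- if `(CL(X), τ_F)` is Hausdorff and has the compact-`G_δ` property,
then it is a `D₀`-space. -/
theorem statement17 (X : Type u) [TopologicalSpace X] [T1Space X] [RegularSpace X]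
    (h2 : T2Space (FellHyper X (CL X)))
    (hG : CompactGDeltaProperty (FellHyper X (CL X))) :
    IsD0Space (FellHyper X (CL X)) := by
  haveI hT2' : T2Space (FellHyper X {A : Set X | IsClosed A}) := fell_t2_closeds h2
  haveI hCS : CompactSpace (FellHyper X {A : Set X | IsClosed A}) := fell_compactSpace_closeds
  haveI hLC' : LocallyCompactSpace (FellHyper X {A : Set X | IsClosed A}) := inferInstance
  have he : Topology.IsOpenEmbedding (toClosedFell X) := by
    refine ⟨⟨⟨?_⟩, ?_⟩, ?_⟩
    · exact (induced_compose (f := toClosedFell X) (g := Subtype.val)).symm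
    · intro a b h
      exact Subtype.ext (congrArg
        (fun c : FellHyper X {A : Set X | IsClosed A} => Subtype.val c) h)
    · have hrange : Set.range (toClosedFell X) =
          {x : FellHyper X {A : Set X | IsClosed A} | (Subtype.val x ∩ univ).Nonempty} := by
        ext x
        simp only [Set.mem_range, mem_setOf_eq, inter_univ]
        constructor
        · rintro ⟨a, rfl⟩
          exact a.2.1
        · intro hne
          exact ⟨⟨Subtype.val x, hne, x.2⟩, Subtype.ext rfl⟩
      rw [hrange]
      exact isOpen_fell_minus isOpen_univ
  haveI : LocallyCompactSpace (FellHyper X (CL X)) := he.locallyCompactSpace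
  exact d0_of_locallyCompact hG
end

section
/- Let X be a sequential T1 regular space. Then F(X), the set of nonempty finite subsets of X, is an open subset of the hyperspace K(X) of nonempty compact subsets with the Fell topology if and only if X is discrete. -/
open Set TopologicalSpace

universe u v

lemma infinite_range_of_tendsto_ne {Y : Type u} [TopologicalSpace Y] [T1Space Y]
    {u : ℕ → Y} {x : Y} (hu : Filter.Tendsto u Filter.atTop (nhds x))
    (hne : ∀ n, u n ≠ x) : (Set.range u).Infinite := by
  intro hfin
  have hx : x ∈ closure (Set.range u) :=
    mem_closure_of_tendsto hu (Filter.Eventually.of_forall fun n => Set.mem_range_self n)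
  rw [hfin.isClosed.closure_eq] at hx
  obtain ⟨n, hn⟩ := hx
  exact hne n hn

/-- for sequential `X`, `ℱ(X)` is open in `(𝒦(X), τ_F)` iff `X` is discrete. -/
theorem statement18 (X : Type u) [TopologicalSpace X] [T1Space X] [RegularSpace X]
    [SequentialSpace X] :
    IsOpen {A : FellHyper X (Kcal X) | A.carrier.Finite} ↔ DiscreteTopology X := by
  constructor
  · intro h
    rw [discreteTopology_iff_isOpen_singleton]
    intro x
    by_contra hx
    -- {x}ᶜ is not closed, hence (sequential) not sequentially closed
    have hnc : ¬ IsClosed ({x}ᶜ : Set X) := by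
      intro hc
      exact hx (by simpa using hc.isOpen_compl)
    have hns : ¬ IsSeqClosed ({x}ᶜ : Set X) := fun hs => hnc hs.isClosed
    rw [IsSeqClosed] at hns
    push_neg at hns
    obtain ⟨u, p, hu1, hu2, hp⟩ := hns
    have hpx : p = x := by simpa using hp
    subst hpx
    have hne : ∀ n, u n ≠ p := fun n => by simpa using hu1 n
    -- unfold induced topology
    obtain ⟨O, hO, hOeq⟩ := (@isOpen_induced_iff (FellHyper X (Kcal X)) (Set X) (fellTopology X) _ Subtype.val).mp h
    have hxK : ({p} : Set X) ∈ Kcal X := ⟨Set.singleton_nonempty p, isCompact_singleton⟩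
    have hxO : ({p} : Set X) ∈ O := by
      have : (⟨{p}, hxK⟩ : FellHyper X (Kcal X)) ∈ Subtype.val ⁻¹' O := by
        exact (Set.ext_iff.mp hOeq _).mpr (Set.finite_singleton p)
      exact this
    -- basis from subbasis
    have hbasis := @TopologicalSpace.isTopologicalBasis_of_subbasis (Set X) (fellTopology X)
      ({S | ∃ U : Set X, IsOpen U ∧ S = {H : Set X | (H ∩ U).Nonempty}} ∪
       {S | ∃ K : Set X, IsCompact K ∧ S = {H : Set X | H ⊆ Kᶜ}}) rfl
    obtain ⟨v, ⟨f, ⟨hffin, hfsub⟩, rfl⟩, hxv, hvO⟩ :=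
      @TopologicalSpace.IsTopologicalBasis.exists_subset_of_mem_open (Set X) (fellTopology X) _ hbasis _ _ hxO hO
    -- for each subbasic set, an open set around p witnessing membership
    have key : ∀ s : f, ∃ W : Set X, IsOpen W ∧ p ∈ W ∧
        ∀ H : Set X, p ∈ H → H ⊆ W → H ∈ (s : Set (Set X)) := by
      rintro ⟨s, hs⟩
      have hxs : ({p} : Set X) ∈ s := hxv s hs
      rcases hfsub hs with ⟨U, hUo, rfl⟩ | ⟨K, hKc, rfl⟩
      · have hpU : p ∈ U := by
          rcases hxs with ⟨y, hy1, hy2⟩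
          rcases hy1 with rfl
          exact hy2
        exact ⟨U, hUo, hpU, fun H hpH hHU => ⟨p, hpH, hHU hpH⟩⟩
      · have hpK : p ∈ Kᶜ := hxs rfl
        exact ⟨Kᶜ, hKc.isClosed.isOpen_compl, hpK, fun H _ hHK => hHK⟩
    choose W hWo hWp hWmem using key
    haveI : Finite ↥f := hffin.to_subtype
    have hVo : IsOpen (⋂ s : f, W s) := isOpen_iInter_of_finite hWo
    have hpV : p ∈ ⋂ s : f, W s := Set.mem_iInter.mpr hWp
    -- eventually the sequence is in V
    have hev : ∀ᶠ n in Filter.atTop, u n ∈ ⋂ s : f, W s :=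
      hu2.eventually_mem (hVo.mem_nhds hpV)
    obtain ⟨N, hN⟩ := Filter.eventually_atTop.mp hev
    set v : ℕ → X := fun n => u (n + N) with hv
    have hvt : Filter.Tendsto v Filter.atTop (nhds p) :=
      hu2.comp (Filter.tendsto_add_atTop_nat N)
    set T : Set X := insert p (Set.range v) with hT
    have hTc : IsCompact T := hvt.isCompact_insert_range
    have hTK : T ∈ Kcal X := ⟨⟨p, Set.mem_insert p _⟩, hTc⟩
    have hTV : T ⊆ ⋂ s : f, W s := by
      rintro y (rfl | ⟨n, rfl⟩)
      · exact hpV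
      · exact hN (n + N) (Nat.le_add_left N n)
    have hTf : T ∈ ⋂₀ f := by
      intro s hs
      exact hWmem ⟨s, hs⟩ T (Set.mem_insert p _)
        (hTV.trans (Set.iInter_subset (fun s : f => W s) ⟨s, hs⟩))
    have hTfin : T.Finite := by
      have : (⟨T, hTK⟩ : FellHyper X (Kcal X)) ∈ Subtype.val ⁻¹' O :=
        hvO hTf
      replace this := (Set.ext_iff.mp hOeq _).mp this
      exact this
    have hTinf : T.Infinite :=
      (infinite_range_of_tendsto_ne hvt fun n => hne (n + N)).mono
        (Set.subset_insert _ _)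
    exact hTinf hTfin
  · intro h
    have : {A : FellHyper X (Kcal X) | A.carrier.Finite} = Set.univ := by
      ext A
      simp only [Set.mem_setOf_eq, Set.mem_univ, iff_true]
      exact A.2.2.finite (IsDiscrete.univ.mono (Set.subset_univ _))
    rw [this]
    exact isOpen_univ
end

section
/- Let X be a T1 regular space. Then no point of K(X) \ F(X), the set of nonempty infinite compact subsets of X, is an isolated point of the subspace K(X) \ F(X) of the hyperspace K(X) with the Fell topology. -/
open Set TopologicalSpace

universe u v

/-- no point of `𝒦(X) \ ℱ(X)` is isolated in the Fell topology. -/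
theorem statement19 (X : Type u) [TopologicalSpace X] [T1Space X] [RegularSpace X]
    (A : FellHyper X (Kcal X \ Fcal X)) :
    ¬ IsOpen ({A} : Set (FellHyper X (Kcal X \ Fcal X))) := by
  intro hopen
  -- unpack the induced topology
  obtain ⟨W, hW, hpre⟩ :
      ∃ W, @IsOpen _ (fellTopology X) W ∧
        (Subtype.val : FellHyper X (Kcal X \ Fcal X) → Set X) ⁻¹' W = {A} :=
    (@isOpen_induced_iff _ _ (fellTopology X) _ _).mp hopen
  have hAW : A.val ∈ W := by
    have : A ∈ (Subtype.val : FellHyper X (Kcal X \ Fcal X) → Set X) ⁻¹' W := by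
      rw [hpre]; rfl
    exact this
  -- basis from subbasis
  have hbasis := @isTopologicalBasis_of_subbasis (Set X) (fellTopology X)
      ({S | ∃ U : Set X, IsOpen U ∧ S = {H : Set X | (H ∩ U).Nonempty}} ∪
       {S | ∃ K : Set X, IsCompact K ∧ S = {H : Set X | H ⊆ Kᶜ}}) rfl
  obtain ⟨t, ⟨f, ⟨hffin, hfsub⟩, rfl⟩, hAt, htW⟩ :=
    @TopologicalSpace.IsTopologicalBasis.exists_subset_of_mem_open _ (fellTopology X) _ hbasis _ _ hAW hW
  classical
  -- the open and compact "coordinates" appearing in f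
  set 𝒢 : Set (Set X) := {U | IsOpen U ∧ {H : Set X | (H ∩ U).Nonempty} ∈ f} with h𝒢
  set 𝒦 : Set (Set X) := {K | IsCompact K ∧ {H : Set X | H ⊆ Kᶜ} ∈ f} with h𝒦
  have h𝒢fin : 𝒢.Finite := by
    have hinj : Set.InjOn (fun U => {H : Set X | (H ∩ U).Nonempty}) 𝒢 := by
      intro U _ V _ h
      ext x
      have := Set.ext_iff.mp h {x}
      simpa [Set.singleton_inter_nonempty] using this
    refine Set.Finite.of_finite_image (hffin.subset ?_) hinj
    rintro _ ⟨U, hU, rfl⟩; exact hU.2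
  have h𝒦fin : 𝒦.Finite := by
    have hinj : Set.InjOn (fun K => {H : Set X | H ⊆ Kᶜ}) 𝒦 := by
      intro K _ K' _ h
      have h1 : Kᶜ ⊆ K'ᶜ := (Set.ext_iff.mp h Kᶜ).mp Set.Subset.rfl
      have h2 : K'ᶜ ⊆ Kᶜ := (Set.ext_iff.mp h K'ᶜ).mpr Set.Subset.rfl
      have : Kᶜ = K'ᶜ := h1.antisymm h2
      exact compl_injective this
    refine Set.Finite.of_finite_image (hffin.subset ?_) hinj
    rintro _ ⟨K, hK, rfl⟩; exact hK.2
  set K₀ : Set X := ⋃₀ 𝒦 with hK₀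
  have hK₀c : IsCompact K₀ := h𝒦fin.isCompact_sUnion fun K hK => hK.1
  have hA𝒢 : ∀ U ∈ 𝒢, (A.val ∩ U).Nonempty := fun U hU => hAt _ hU.2
  have hAK : A.val ⊆ K₀ᶜ := by
    intro x hx hxK
    obtain ⟨K, hK, hxK⟩ := hxK
    exact (hAt _ hK.2 hx) hxK
  have htrap : ∀ B : Set X, B ⊆ K₀ᶜ → (∀ U ∈ 𝒢, (B ∩ U).Nonempty) → B ∈ ⋂₀ f := by
    intro B hBK hB𝒢 s hs
    rcases hfsub hs with ⟨U, hU, rfl⟩ | ⟨K, hK, rfl⟩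
    · exact hB𝒢 U ⟨hU, hs⟩
    · intro x hx hxK
      exact hBK hx ⟨K, ⟨hK, hs⟩, hxK⟩
  -- choose witnesses in A ∩ U for each U in 𝒢
  have hex : ∀ U ∈ 𝒢, ∃ x, x ∈ A.val ∩ U := fun U hU => hA𝒢 U hU
  have hne : Nonempty X := ⟨A.2.1.1.choose⟩
  choose! g hg using hex
  set P : Set X := g '' 𝒢 with hPdef
  have hPfin : P.Finite := h𝒢fin.image g
  have hPA : P ⊆ A.val := by rintro _ ⟨U, hU, rfl⟩; exact (hg U hU).1
  have hP𝒢 : ∀ B : Set X, P ⊆ B → ∀ U ∈ 𝒢, (B ∩ U).Nonempty :=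
    fun B hPB U hU => ⟨g U, hPB ⟨U, hU, rfl⟩, (hg U hU).2⟩
  have hAinf : A.val.Infinite := fun hfin => A.2.2 ⟨A.2.1.1, hfin⟩
  obtain ⟨a, ha⟩ := (hAinf.diff hPfin).nonempty
  obtain ⟨a', ha'⟩ := ((hAinf.diff hPfin).diff (Set.finite_singleton a)).nonempty
  -- separate a from the finite closed set insert a' P
  set C : Set X := insert a' P with hCdef
  have hCclosed : IsClosed C := (hPfin.insert a').isClosed
  have haC : a ∈ Cᶜ := by
    intro hmem
    rcases hmem with h | h
    · exact ha'.2 (h ▸ rfl)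
    · exact ha.2 h
  obtain ⟨D, hDnhds, hDclosed, hDsub⟩ :=
    exists_mem_nhds_isClosed_subset (hCclosed.isOpen_compl.mem_nhds haC)
  set V : Set X := interior D with hVdef
  have haV : a ∈ V := mem_interior_iff_mem_nhds.mpr hDnhds
  have hclV : closure V ⊆ Cᶜ := (closure_minimal interior_subset hDclosed).trans hDsub
  -- any infinite compact subset of A containing P must equal A
  have key : ∀ B : Set X, IsCompact B → B.Infinite → B ⊆ A.val → P ⊆ B → B = A.val := by
    intro B hBc hBinf hBA hPB
    have hBmem : B ∈ Kcal X \ Fcal X := ⟨⟨hBinf.nonempty, hBc⟩, fun h => hBinf h.2⟩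
    have hmem : (⟨B, hBmem⟩ : FellHyper X (Kcal X \ Fcal X)) ∈
        (Subtype.val : FellHyper X (Kcal X \ Fcal X) → Set X) ⁻¹' W :=
      htW (htrap B (hBA.trans hAK) (hP𝒢 B hPB))
    rw [hpre] at hmem
    exact congrArg Subtype.val (Set.mem_singleton_iff.mp hmem)
  set B1 : Set X := (A.val ∩ Vᶜ) ∪ P with hB1def
  set B2 : Set X := (A.val ∩ closure V) ∪ P with hB2def
  have hB1c : IsCompact B1 :=
    (A.2.1.2.inter_right isOpen_interior.isClosed_compl).union hPfin.isCompact
  have hB2c : IsCompact B2 :=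
    (A.2.1.2.inter_right isClosed_closure).union hPfin.isCompact
  have hB1A : B1 ⊆ A.val := Set.union_subset Set.inter_subset_left hPA
  have hB2A : B2 ⊆ A.val := Set.union_subset Set.inter_subset_left hPA
  have hcov : A.val ⊆ B1 ∪ B2 := by
    intro x hx
    by_cases hxV : x ∈ V
    · exact Or.inr (Or.inl ⟨hx, subset_closure hxV⟩)
    · exact Or.inl (Or.inl ⟨hx, hxV⟩)
  have hone : B1.Infinite ∨ B2.Infinite := by
    by_contra h
    push_neg at h
    exact hAinf ((h.1.union h.2).subset hcov)
  rcases hone with h1 | h2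
  · have hEq := key B1 hB1c h1 hB1A Set.subset_union_right
    have : a ∈ B1 := hEq ▸ ha.1
    rcases this with h | h
    · exact h.2 haV
    · exact ha.2 h
  · have hEq := key B2 hB2c h2 hB2A Set.subset_union_right
    have : a' ∈ B2 := hEq ▸ ha'.1.1
    rcases this with h | h
    · exact hclV h.2 (Or.inl rfl)
    · exact ha'.1.2 h
end
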